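/- Let δ ≥ 1 be real, s > 0, t > 0, x ≥ 0 and z > 0. Then ∫₀^∞ p_t(x, y) p_s(y, z) dy = p_{t+s}(x, z), where p_t is the BES(δ) transition density; i.e., the kernels (p_t)_{t>0} satisfy the Chapman–Kolmogorov semigroup equation. -/

import Mathlib

set_option maxHeartbeats 1000000

open Real MeasureTheory

open MeasureTheory

/-- Imaginary-argument normalized spherical Bessel function `ĵ_ν(z) = j_ν(iz)`. -/
noncomputable def sphBesselI (ν : ℝ) (z : ℝ) : ℝ :=
  Real.Gamma (ν + 1) *
    ∑' m : ℕ, (z / 2) ^ (2 * m) / (Nat.factorial m * Real.Gamma (ν + m + 1))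

/-- Transition density `p_t(x,y)` of the `δ`-dimensional Bessel process BES(δ). -/
noncomputable def besselDensity (δ t x y : ℝ) : ℝ :=
  2 * y ^ (δ - 1) * (2 * t) ^ (-(δ / 2)) / Real.Gamma (δ / 2) *
    sphBesselI (δ / 2 - 1) (x * y / t) * Real.exp (-(x ^ 2 + y ^ 2) / (2 * t))

namespace BesselCK

lemma gamma_add_nat {a : ℝ} (ha : 0 < a) (n : ℕ) :
    Real.Gamma (a + n) = (ascPochhammer ℝ n).eval a * Real.Gamma a := by
  induction n with
  | zero => simp
  | succ n ih =>
      have h : a + ((n : ℕ) + 1 : ℕ) = (a + n) + 1 := by push_cast; ring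
      have hpos : (0:ℝ) < a + n := by positivity
      rw [h, Real.Gamma_add_one hpos.ne', ih, ascPochhammer_succ_eval]
      ring

lemma ascPoch_pos {a : ℝ} (ha : 0 < a) (n : ℕ) :
    0 < (ascPochhammer ℝ n).eval a := by
  induction n with
  | zero => simp
  | succ n ih =>
      rw [ascPochhammer_succ_eval]
      have : (0:ℝ) < a + n := by positivity
      positivity

lemma ascPoch_ge {a : ℝ} (ha : 1/2 ≤ a) (n : ℕ) :
    (n.factorial : ℝ) / 2 ^ n ≤ (ascPochhammer ℝ n).eval a := by
  have ha0 : (0:ℝ) < a := lt_of_lt_of_le (by norm_num) ha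
  induction n with
  | zero => simp
  | succ n ih =>
      rw [ascPochhammer_succ_eval]
      have h1 : ((n+1 : ℕ) : ℝ) / 2 ≤ a + n := by
        push_cast
        nlinarith
      have h2 : (0:ℝ) ≤ (n.factorial : ℝ) / 2 ^ n := by positivity
      calc ((n+1).factorial : ℝ) / 2 ^ (n+1) = ((n.factorial:ℝ) / 2 ^ n) * (((n+1:ℕ):ℝ)/2) := by
            push_cast [Nat.factorial_succ]; ring
        _ ≤ (ascPochhammer ℝ n).eval a * (a + n) := by
            apply mul_le_mul ih h1 (by positivity) (le_of_lt (ascPoch_pos ha0 n))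

lemma gamma_add_nat_ge {a : ℝ} (ha : 1/2 ≤ a) (n : ℕ) :
    (n.factorial : ℝ) / 2 ^ n * Real.Gamma a ≤ Real.Gamma (a + n) := by
  have ha0 : (0:ℝ) < a := lt_of_lt_of_le (by norm_num) ha
  rw [gamma_add_nat ha0 n]
  exact mul_le_mul_of_nonneg_right (ascPoch_ge ha n)
    (Real.Gamma_pos_of_pos ha0).le

lemma gamma_add_nat_pos {a : ℝ} (ha : 0 < a) (n : ℕ) : 0 < Real.Gamma (a + n) :=
  Real.Gamma_pos_of_pos (by positivity)

lemma nat_aux (n j : ℕ) :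
    n.choose (j+1) * (j+1).factorial = n * ((n-1).choose j) * j.factorial := by
  cases n with
  | zero => simp
  | succ n =>
      have h := Nat.add_one_mul_choose_eq n j
      calc (n+1).choose (j+1) * (j+1).factorial
          = ((n+1).choose (j+1) * (j+1)) * j.factorial := by
            rw [Nat.factorial_succ]; ring
        _ = (n.succ * n.choose j) * j.factorial := by rw [← h]
        _ = (n+1) * ((n+1-1).choose j) * j.factorial := by simp [Nat.succ_sub_one]

lemma vandermonde (m : ℕ) : ∀ (a : ℝ) (n : ℕ),
    ∑ k ∈ Finset.range (m+1), (m.choose k * n.choose k * k.factorial : ℝ) *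
      (ascPochhammer ℝ (m - k)).eval (a + k) = (ascPochhammer ℝ m).eval (a + n) := by
  induction m with
  | zero => intro a n; simp
  | succ m ih =>
      intro a n
      have hsplit : ∀ k ∈ Finset.range (m+2),
          ((m+1).choose k * n.choose k * k.factorial : ℝ) *
            (ascPochhammer ℝ (m+1-k)).eval (a+k)
          = (m.choose k * n.choose k * k.factorial : ℝ) *
              (ascPochhammer ℝ (m+1-k)).eval (a+k)
            + (if k = 0 then 0 else
                (m.choose (k-1) * n.choose k * k.factorial : ℝ) *
                  (ascPochhammer ℝ (m+1-k)).eval (a+k)) := by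
        intro k _
        rcases Nat.eq_zero_or_pos k with hk | hk
        · subst hk; simp
        · obtain ⟨j, rfl⟩ := Nat.exists_eq_add_of_le hk
          rw [Nat.add_comm 1 j]
          simp only [Nat.choose_succ_succ m j, if_neg (Nat.succ_ne_zero j),
            Nat.add_sub_cancel]
          push_cast
          ring
      rw [Finset.sum_congr rfl hsplit, Finset.sum_add_distrib]
      have hT1 : ∑ k ∈ Finset.range (m+2),
          (m.choose k * n.choose k * k.factorial : ℝ) *
            (ascPochhammer ℝ (m+1-k)).eval (a+k)
          = (a + m) * (ascPochhammer ℝ m).eval (a + n) := by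
        rw [Finset.sum_range_succ]
        rw [Nat.choose_succ_self m]
        simp only [Nat.cast_zero, zero_mul, mul_zero, add_zero]
        have : ∀ k ∈ Finset.range (m+1),
            (m.choose k * n.choose k * k.factorial : ℝ) *
              (ascPochhammer ℝ (m+1-k)).eval (a+k)
            = ((m.choose k * n.choose k * k.factorial : ℝ) *
                (ascPochhammer ℝ (m-k)).eval (a+k)) * (a + m) := by
          intro k hk
          have hkm : k ≤ m := Nat.lt_succ_iff.mp (Finset.mem_range.mp hk)
          have h1 : m + 1 - k = (m - k) + 1 := by omega
          rw [h1, ascPochhammer_succ_eval]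
          have h2 : a + k + ((m - k : ℕ) : ℝ) = a + m := by
            rw [Nat.cast_sub hkm]; ring
          rw [h2]; ring
        rw [Finset.sum_congr rfl this, ← Finset.sum_mul, ih a n]
        ring
      have hT2 : ∑ k ∈ Finset.range (m+2),
          (if k = 0 then (0:ℝ) else
            (m.choose (k-1) * n.choose k * k.factorial : ℝ) *
              (ascPochhammer ℝ (m+1-k)).eval (a+k))
          = n * (ascPochhammer ℝ m).eval (a + n) := by
        rw [Finset.sum_range_succ']
        simp only [Nat.succ_ne_zero, if_false, Nat.add_sub_cancel, eq_self_iff_true,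
          if_true, add_zero, ite_false, ite_true]
        rcases Nat.eq_zero_or_pos n with hn | hn
        · subst hn
          simp
        · have key : ∀ j ∈ Finset.range (m+1),
              (m.choose j * n.choose (j+1) * (j+1).factorial : ℝ) *
                (ascPochhammer ℝ (m+1-(j+1))).eval (a+((j+1:ℕ):ℝ))
              = (n:ℝ) * ((m.choose j * (n-1).choose j * j.factorial : ℝ) *
                  (ascPochhammer ℝ (m-j)).eval ((a+1)+j)) := by
            intro j hj
            have h3 : m + 1 - (j+1) = m - j := by omega
            have h4 : a + (((j+1 : ℕ)) : ℝ) = (a+1) + j := by push_cast; ring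
            have h5 : ((n.choose (j+1)) * ((j+1).factorial) : ℝ)
                = (n : ℝ) * ((n-1).choose j) * j.factorial := by
              exact_mod_cast congrArg (Nat.cast (R := ℝ)) (nat_aux n j)
            rw [h3, h4]
            linear_combination ((m.choose j : ℝ) *
              (ascPochhammer ℝ (m-j)).eval ((a+1)+j)) * h5
          rw [Finset.sum_congr rfl key, ← Finset.mul_sum, ih (a+1) (n-1)]
          have h6 : (a + 1) + ((n-1 : ℕ) : ℝ) = a + n := by
            rw [Nat.cast_sub hn]; push_cast; ring
          rw [h6]
      rw [hT1, hT2, ascPochhammer_succ_eval]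
      ring

lemma vandermonde_gamma {a : ℝ} (ha : 0 < a) (m n : ℕ) :
    ∑ k ∈ Finset.range (m+1),
        (m.choose k * n.choose k * k.factorial : ℝ) / Real.Gamma (a + k)
      = Real.Gamma (a + m + n) / (Real.Gamma (a + m) * Real.Gamma (a + n)) := by
  have ha0 : ∀ k : ℕ, (0:ℝ) < a + k := fun k => by positivity
  have step : ∀ k ∈ Finset.range (m+1),
      (m.choose k * n.choose k * k.factorial : ℝ) / Real.Gamma (a + k)
      = ((m.choose k * n.choose k * k.factorial : ℝ) *
          (ascPochhammer ℝ (m-k)).eval (a+k)) / Real.Gamma (a + m) := by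
    intro k hk
    have hkm : k ≤ m := Nat.lt_succ_iff.mp (Finset.mem_range.mp hk)
    have hG : Real.Gamma (a + m) = (ascPochhammer ℝ (m-k)).eval (a+k) * Real.Gamma (a+k) := by
      have h := gamma_add_nat (ha0 k) (m-k)
      rw [show (a + (k:ℝ)) + ((m-k : ℕ):ℝ) = a + m by rw [Nat.cast_sub hkm]; ring] at h
      exact h
    have hP : (0:ℝ) < (ascPochhammer ℝ (m-k)).eval (a+k) := ascPoch_pos (ha0 k) _
    rw [hG, mul_comm ((m.choose k * n.choose k * k.factorial : ℝ)) _,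
      mul_div_mul_left _ _ hP.ne']
  rw [Finset.sum_congr rfl step, ← Finset.sum_div, vandermonde m a n]
  rw [show a + (m:ℝ) + n = (a + (n:ℝ)) + m by ring, gamma_add_nat (ha0 n) m]
  have h1 : (0:ℝ) < Real.Gamma (a + m) := Real.Gamma_pos_of_pos (ha0 m)
  have h2 : (0:ℝ) < Real.Gamma (a + n) := Real.Gamma_pos_of_pos (ha0 n)
  field_simp

noncomputable def Jf (a w : ℝ) : ℕ → ℝ := fun m => w ^ m / (m.factorial * Real.Gamma (a + m))

noncomputable def J (a w : ℝ) : ℝ := ∑' m, Jf a w m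

lemma Jf_nonneg {a w : ℝ} (ha : 0 < a) (hw : 0 ≤ w) (m : ℕ) : 0 ≤ Jf a w m := by
  have h1 : (0:ℝ) < Real.Gamma (a + m) := gamma_add_nat_pos ha m
  have h2 : (0:ℝ) < m.factorial := by exact_mod_cast m.factorial_pos
  exact div_nonneg (pow_nonneg hw m) (by positivity)

lemma summable_Jf {a : ℝ} (ha : 1/2 ≤ a) {w : ℝ} (hw : 0 ≤ w) : Summable (Jf a w) := by
  have ha0 : (0:ℝ) < a := lt_of_lt_of_le (by norm_num) ha
  have hGa : (0:ℝ) < Real.Gamma a := Real.Gamma_pos_of_pos ha0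
  refine Summable.of_nonneg_of_le (Jf_nonneg ha0 hw)
    (fun m => ?_) ((Real.summable_pow_div_factorial (2*w)).mul_right (1 / Real.Gamma a))
  have hfac : (1:ℝ) ≤ m.factorial := by exact_mod_cast m.factorial_pos
  have hG := gamma_add_nat_ge ha m
  have hden : (0:ℝ) < (m.factorial:ℝ) / 2 ^ m * Real.Gamma a := by positivity
  calc Jf a w m ≤ w ^ m / ((m.factorial:ℝ) * ((m.factorial:ℝ) / 2 ^ m * Real.Gamma a)) := by
        refine div_le_div_of_nonneg_left (pow_nonneg hw m) (by positivity) ?_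
        exact mul_le_mul_of_nonneg_left hG (by positivity)
    _ = (2*w) ^ m / ((m.factorial:ℝ) * (m.factorial:ℝ)) * (1 / Real.Gamma a) := by
        rw [mul_pow]
        field_simp
    _ ≤ (2*w) ^ m / (m.factorial:ℝ) * (1 / Real.Gamma a) := by
        refine mul_le_mul_of_nonneg_right ?_ (by positivity)
        refine div_le_div_of_nonneg_left (by positivity) (by positivity) ?_
        nlinarith

lemma tsum_exp_series (x : ℝ) : ∑' n : ℕ, x ^ n / n.factorial = Real.exp x := by
  rw [Real.exp_eq_exp_ℝ, NormedSpace.exp_eq_tsum_div]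

lemma summable_exp_series (x : ℝ) : Summable (fun n : ℕ => x ^ n / n.factorial) :=
  Real.summable_pow_div_factorial x

noncomputable def f2 (a A B : ℝ) : ℕ × ℕ → ℝ := fun p =>
  Real.Gamma (a + p.1 + p.2) / (Real.Gamma (a + p.1) * Real.Gamma (a + p.2)) *
    (A ^ p.1 * B ^ p.2 / (p.1.factorial * p.2.factorial))

lemma choose_le_two_pow (n k : ℕ) : n.choose k ≤ 2 ^ n := by
  rcases le_or_gt k n with h | h
  · calc n.choose k ≤ ∑ j ∈ Finset.range (n+1), n.choose j :=
        Finset.single_le_sum (fun j _ => Nat.zero_le _)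
          (Finset.mem_range.mpr (Nat.lt_succ_of_le h))
    _ = 2 ^ n := Nat.sum_range_choose n
  · rw [Nat.choose_eq_zero_of_lt h]; exact Nat.zero_le _

lemma sum_choose_two_pow (m : ℕ) :
    ∑ k ∈ Finset.range (m+1), (m.choose k : ℝ) * 2 ^ k = 3 ^ m := by
  have h := add_pow (2:ℝ) 1 m
  simp only [one_pow, mul_one] at h
  norm_num at h
  rw [h]
  exact Finset.sum_congr rfl fun k _ => by ring

lemma f2_nonneg {a A B : ℝ} (ha : 0 < a) (hA : 0 ≤ A) (hB : 0 ≤ B) (p : ℕ × ℕ) :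
    0 ≤ f2 a A B p := by
  have h1 : (0:ℝ) < Real.Gamma (a + p.1) := gamma_add_nat_pos ha p.1
  have h2 : (0:ℝ) < Real.Gamma (a + p.2) := gamma_add_nat_pos ha p.2
  have h3 : (0:ℝ) ≤ Real.Gamma (a + p.1 + p.2) := by
    have : (0:ℝ) < Real.Gamma ((a + p.1) + p.2) := gamma_add_nat_pos (by positivity) p.2
    linarith
  have h4 : (0:ℝ) < (p.1.factorial : ℝ) := by exact_mod_cast p.1.factorial_pos
  have h5 : (0:ℝ) < (p.2.factorial : ℝ) := by exact_mod_cast p.2.factorial_pos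
  refine mul_nonneg (div_nonneg h3 (by positivity)) ?_
  exact div_nonneg (mul_nonneg (pow_nonneg hA p.1) (pow_nonneg hB p.2)) (by positivity)

lemma ratio_le {a : ℝ} (ha : 1/2 ≤ a) (m n : ℕ) :
    Real.Gamma (a + m + n) / (Real.Gamma (a + m) * Real.Gamma (a + n))
      ≤ 1 / Real.Gamma a * (3 ^ m * 2 ^ n) := by
  have ha0 : (0:ℝ) < a := lt_of_lt_of_le (by norm_num) ha
  have hGa : (0:ℝ) < Real.Gamma a := Real.Gamma_pos_of_pos ha0
  rw [← vandermonde_gamma ha0 m n]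
  have step : ∀ k ∈ Finset.range (m+1),
      (m.choose k * n.choose k * k.factorial : ℝ) / Real.Gamma (a + k)
        ≤ (m.choose k : ℝ) * 2 ^ k * 2 ^ n * (1 / Real.Gamma a) := by
    intro k hk
    have hG := gamma_add_nat_ge ha k
    have hkf : (0:ℝ) < (k.factorial : ℝ) := by exact_mod_cast k.factorial_pos
    have hGk : (0:ℝ) < Real.Gamma (a + k) := gamma_add_nat_pos ha0 k
    have hden : (0:ℝ) < (k.factorial:ℝ) / 2 ^ k * Real.Gamma a := by positivity
    have hchoose : (n.choose k : ℝ) ≤ 2 ^ n := by exact_mod_cast choose_le_two_pow n k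
    calc (m.choose k * n.choose k * k.factorial : ℝ) / Real.Gamma (a + k)
        ≤ (m.choose k * n.choose k * k.factorial : ℝ) /
            ((k.factorial:ℝ) / 2 ^ k * Real.Gamma a) := by
          refine div_le_div_of_nonneg_left (by positivity) hden hG
      _ = (m.choose k : ℝ) * (n.choose k) * 2 ^ k * (1 / Real.Gamma a) := by
          rw [div_eq_iff hden.ne']
          field_simp
      _ ≤ (m.choose k : ℝ) * 2 ^ n * 2 ^ k * (1 / Real.Gamma a) := by
          have : (0:ℝ) ≤ (m.choose k : ℝ) := by positivity
          gcongr
      _ = (m.choose k : ℝ) * 2 ^ k * 2 ^ n * (1 / Real.Gamma a) := by ring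
  calc ∑ k ∈ Finset.range (m+1),
        (m.choose k * n.choose k * k.factorial : ℝ) / Real.Gamma (a + k)
      ≤ ∑ k ∈ Finset.range (m+1), (m.choose k : ℝ) * 2 ^ k * 2 ^ n * (1 / Real.Gamma a) :=
        Finset.sum_le_sum step
    _ = (∑ k ∈ Finset.range (m+1), (m.choose k : ℝ) * 2 ^ k) * 2 ^ n * (1 / Real.Gamma a) := by
        rw [← Finset.sum_mul, ← Finset.sum_mul]
    _ = 1 / Real.Gamma a * (3 ^ m * 2 ^ n) := by rw [sum_choose_two_pow]; ring

lemma summable_f2 {a A B : ℝ} (ha : 1/2 ≤ a) (hA : 0 ≤ A) (hB : 0 ≤ B) :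
    Summable (f2 a A B) := by
  have ha0 : (0:ℝ) < a := lt_of_lt_of_le (by norm_num) ha
  have hGa : (0:ℝ) < Real.Gamma a := Real.Gamma_pos_of_pos ha0
  have hbig : Summable (fun p : ℕ × ℕ =>
      (1 / Real.Gamma a) * (((3*A) ^ p.1 / p.1.factorial) * ((2*B) ^ p.2 / p.2.factorial))) := by
    refine Summable.mul_left _ ?_
    refine (Real.summable_pow_div_factorial (3*A)).mul_of_nonneg
      (Real.summable_pow_div_factorial (2*B)) (fun m => ?_) (fun n => ?_)
    · exact div_nonneg (pow_nonneg (by linarith) m) (Nat.cast_nonneg _)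
    · exact div_nonneg (pow_nonneg (by linarith) n) (Nat.cast_nonneg _)
  refine Summable.of_nonneg_of_le (f2_nonneg ha0 hA hB) (fun p => ?_) hbig
  obtain ⟨m, n⟩ := p
  have h4 : (0:ℝ) < (m.factorial : ℝ) := by exact_mod_cast m.factorial_pos
  have h5 : (0:ℝ) < (n.factorial : ℝ) := by exact_mod_cast n.factorial_pos
  calc f2 a A B (m, n)
      ≤ (1 / Real.Gamma a * (3 ^ m * 2 ^ n)) * (A ^ m * B ^ n / (m.factorial * n.factorial)) := by
        refine mul_le_mul_of_nonneg_right (ratio_le ha m n) ?_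
        positivity
    _ = (1 / Real.Gamma a) * (((3*A) ^ m / m.factorial) * ((2*B) ^ n / n.factorial)) := by
        rw [mul_pow, mul_pow]
        field_simp

lemma tsum_f2 {a A B : ℝ} (ha : 1/2 ≤ a) (hA : 0 ≤ A) (hB : 0 ≤ B) :
    ∑' p : ℕ × ℕ, f2 a A B p = Real.exp (A + B) * J a (A * B) := by
  have ha0 : (0:ℝ) < a := lt_of_lt_of_le (by norm_num) ha
  have hGk : ∀ k : ℕ, (0:ℝ) < Real.Gamma (a + k) := fun k => gamma_add_nat_pos ha0 k
  set u : ℕ → ℝ := fun p => A ^ p / p.factorial with hu_def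
  set v : ℕ → ℝ := fun q => B ^ q / q.factorial with hv_def
  have hu : Summable u := Real.summable_pow_div_factorial A
  have hv : Summable v := Real.summable_pow_div_factorial B
  have hu0 : ∀ p, 0 ≤ u p := fun p => div_nonneg (pow_nonneg hA p) (Nat.cast_nonneg _)
  have hv0 : ∀ q, 0 ≤ v q := fun q => div_nonneg (pow_nonneg hB q) (Nat.cast_nonneg _)
  have huv : Summable (fun z : ℕ × ℕ => u z.1 * v z.2) :=
    hu.mul_of_nonneg hv hu0 hv0
  set g : (ℕ × ℕ) × ℕ → ℝ := fun w =>
    (w.1.1.choose w.2 * w.1.2.choose w.2 * w.2.factorial : ℝ) / Real.Gamma (a + w.2) *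
      (A ^ w.1.1 * B ^ w.1.2 / (w.1.1.factorial * w.1.2.factorial)) with hg_def
  set i : ℕ × ℕ × ℕ → (ℕ × ℕ) × ℕ := fun q => ((q.1 + q.2.1, q.1 + q.2.2), q.1) with hi_def
  have hgi : ∀ q : ℕ × ℕ × ℕ,
      g (i q) = Jf a (A*B) q.1 * (u q.2.1 * v q.2.2) := by
    rintro ⟨k, p, q⟩
    simp only [hg_def, hi_def, hu_def, hv_def, Jf]
    have e1 : (((k+p).choose k : ℝ)) * (k.factorial : ℝ) * (p.factorial : ℝ)
        = ((k+p).factorial : ℝ) := by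
      exact_mod_cast congrArg (Nat.cast (R := ℝ))
        (by simpa using Nat.choose_mul_factorial_mul_factorial (Nat.le_add_right k p))
    have e2 : (((k+q).choose k : ℝ)) * (k.factorial : ℝ) * (q.factorial : ℝ)
        = ((k+q).factorial : ℝ) := by
      exact_mod_cast congrArg (Nat.cast (R := ℝ))
        (by simpa using Nat.choose_mul_factorial_mul_factorial (Nat.le_add_right k q))
    have hkf : ((k.factorial : ℝ)) ≠ 0 := by exact_mod_cast k.factorial_ne_zero
    have hpf : ((p.factorial : ℝ)) ≠ 0 := by exact_mod_cast p.factorial_ne_zero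
    have hqf : ((q.factorial : ℝ)) ≠ 0 := by exact_mod_cast q.factorial_ne_zero
    rw [← e1, ← e2, pow_add, pow_add, mul_pow]
    have hc1 : (((k+p).choose k : ℝ)) ≠ 0 := by
      exact_mod_cast (Nat.choose_pos (Nat.le_add_right k p)).ne'
    have hc2 : (((k+q).choose k : ℝ)) ≠ 0 := by
      exact_mod_cast (Nat.choose_pos (Nat.le_add_right k q)).ne'
    field_simp
  have hsum_gi : Summable (g ∘ i) := by
    refine Summable.congr ?_ (fun q => (hgi q).symm)
    refine (summable_Jf ha (mul_nonneg hA hB)).mul_of_nonneg huv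
      (fun k => Jf_nonneg ha0 (mul_nonneg hA hB) k)
      (fun z => mul_nonneg (hu0 z.1) (hv0 z.2))
  have hinj : Function.Injective i := by
    rintro ⟨k, p, q⟩ ⟨k', p', q'⟩ h
    simp only [hi_def, Prod.mk.injEq] at h
    obtain ⟨⟨h1, h2⟩, h3⟩ := h
    simp only [Prod.mk.injEq]
    omega
  have hsupp : ∀ w, w ∉ Set.range i → g w = 0 := by
    rintro ⟨⟨m, n⟩, k⟩ hw
    by_cases hkm : k ≤ m
    · by_cases hkn : k ≤ n
      · refine absurd ⟨(k, (m - k, n - k)), ?_⟩ hw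
        simp only [hi_def]
        have h1 : k + (m - k) = m := by omega
        have h2 : k + (n - k) = n := by omega
        rw [h1, h2]
      · simp [hg_def, Nat.choose_eq_zero_of_lt (lt_of_not_ge hkn)]
    · simp [hg_def, Nat.choose_eq_zero_of_lt (lt_of_not_ge hkm)]
  have hsumg : Summable g := (hinj.summable_iff hsupp).mp hsum_gi
  -- step a : fiberwise identity
  have hfiber : ∀ p : ℕ × ℕ, f2 a A B p = ∑' k, g (p, k) := by
    rintro ⟨m, n⟩
    have hz : ∀ k ∉ Finset.range (m+1), g ((m, n), k) = 0 := by
      intro k hk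
      have hmk : m < k := by
        by_contra hcon
        exact hk (Finset.mem_range.mpr (Nat.lt_succ_of_le (le_of_not_gt hcon)))
      simp [hg_def, Nat.choose_eq_zero_of_lt hmk]
    rw [tsum_eq_sum hz]
    show Real.Gamma (a + m + n) / (Real.Gamma (a + m) * Real.Gamma (a + n)) *
      (A ^ m * B ^ n / (m.factorial * n.factorial)) = _
    rw [← vandermonde_gamma ha0 m n, Finset.sum_mul]
  have hs2 : Summable (fun q : ℕ × ℕ × ℕ => Jf a (A*B) q.1 * (u q.2.1 * v q.2.2)) :=
    hsum_gi.congr hgi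
  calc ∑' p : ℕ × ℕ, f2 a A B p
      = ∑' (p : ℕ × ℕ), ∑' k, g (p, k) := tsum_congr hfiber
    _ = ∑' w : (ℕ × ℕ) × ℕ, g w := (Summable.tsum_prod hsumg).symm
    _ = ∑' q : ℕ × ℕ × ℕ, g (i q) :=
        (hinj.tsum_eq (Function.support_subset_iff'.mpr hsupp)).symm
    _ = ∑' q : ℕ × ℕ × ℕ, Jf a (A*B) q.1 * (u q.2.1 * v q.2.2) := tsum_congr hgi
    _ = ∑' k, ∑' z : ℕ × ℕ, Jf a (A*B) k * (u z.1 * v z.2) := Summable.tsum_prod hs2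
    _ = ∑' k, Jf a (A*B) k * ∑' z : ℕ × ℕ, u z.1 * v z.2 :=
        tsum_congr fun k => tsum_mul_left
    _ = (∑' k, Jf a (A*B) k) * ∑' z : ℕ × ℕ, u z.1 * v z.2 := tsum_mul_right
    _ = J a (A*B) * (Real.exp A * Real.exp B) := by
        rw [← Summable.tsum_mul_tsum hu hv huv]
        simp only [hu_def, hv_def, tsum_exp_series]
        rfl
    _ = Real.exp (A + B) * J a (A*B) := by rw [Real.exp_add]; ring

lemma sphBesselI_eq (a z : ℝ) : sphBesselI (a - 1) z = Real.Gamma a * J a ((z/2)^2) := by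
  unfold sphBesselI J Jf
  rw [sub_add_cancel]
  congr 1
  refine tsum_congr fun m => ?_
  rw [pow_mul]
  rw [show a - 1 + (m:ℝ) + 1 = a + m by ring]

lemma besselDensity_eq {δ t : ℝ} (hδ : 0 < δ) (ht : 0 < t) (x y : ℝ) :
    besselDensity δ t x y =
      2 * y ^ (δ - 1) * (2*t) ^ (-(δ/2)) * J (δ/2) ((x*y/(2*t))^2) *
        Real.exp (-(x^2+y^2)/(2*t)) := by
  unfold besselDensity
  have hG : Real.Gamma (δ/2) ≠ 0 := (Real.Gamma_pos_of_pos (by positivity)).ne'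
  rw [sphBesselI_eq (δ/2)]
  rw [show x * y / t / 2 = x*y/(2*t) by rw [div_div, mul_comm t 2]]
  field_simp


lemma gaussian_moment {c q : ℝ} (hc : 0 < c) (hq : -1 < q) :
    ∫ y in Set.Ioi (0:ℝ), y ^ q * Real.exp (-c * y^2)
      = c ^ (-(q+1)/2) * (1/2) * Real.Gamma ((q+1)/2) := by
  rw [← integral_rpow_mul_exp_neg_mul_rpow two_pos hq hc]
  refine setIntegral_congr_fun measurableSet_Ioi fun y hy => ?_
  rw [show ((2:ℝ)) = ((2:ℕ):ℝ) by norm_num, Real.rpow_natCast]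

lemma gaussian_moment_integrable {c q : ℝ} (hc : 0 < c) (hq : -1 < q) :
    IntegrableOn (fun y : ℝ => y ^ q * Real.exp (-c * y^2)) (Set.Ioi 0) := by
  have h := integrableOn_rpow_mul_exp_neg_mul_rpow (p := 2) hq two_pos hc
  refine h.congr_fun (fun y hy => ?_) measurableSet_Ioi
  dsimp only
  rw [show ((2:ℝ)) = ((2:ℕ):ℝ) by norm_num, Real.rpow_natCast]

end BesselCK

open BesselCK in
/-- Chapman–Kolmogorov semigroup equation for the BES(δ) transition densities. -/
theorem besselDensity_chapman_kolmogorov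
    (δ : ℝ) (hδ : 1 ≤ δ) (s t x z : ℝ) (hs : 0 < s) (ht : 0 < t)
    (hx : 0 ≤ x) (hz : 0 < z) :
    ∫ y in Set.Ioi (0 : ℝ), besselDensity δ t x y * besselDensity δ s y z =
      besselDensity δ (t + s) x z := by
  have hδ0 : 0 < δ := lt_of_lt_of_le one_pos hδ
  set a : ℝ := δ/2 with ha_def
  have ha : 1/2 ≤ a := by rw [ha_def]; linarith
  have ha0 : (0:ℝ) < a := by linarith
  have hGk : ∀ k : ℕ, (0:ℝ) < Real.Gamma (a + k) := fun k => gamma_add_nat_pos ha0 k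
  have hts : (0:ℝ) < t + s := by linarith
  set c : ℝ := (t+s)/(2*t*s) with hc_def
  have hc : 0 < c := div_pos hts (by positivity)
  set ux : ℝ := (x/(2*t))^2 with hux_def
  set vz : ℝ := (z/(2*s))^2 with hvz_def
  have hux : 0 ≤ ux := sq_nonneg _
  have hvz : 0 ≤ vz := sq_nonneg _
  set A : ℝ := ux / c with hA_def
  set B : ℝ := vz / c with hB_def
  have hA : 0 ≤ A := div_nonneg hux hc.le
  have hB : 0 ≤ B := div_nonneg hvz hc.le
  set K0 : ℝ := 4 * z ^ (δ-1) * ((2*t) ^ (-a) * (2*s) ^ (-a)) *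
    (Real.exp (-x^2/(2*t)) * Real.exp (-z^2/(2*s))) with hK0_def
  have hzp : (0:ℝ) ≤ z ^ (δ-1) := Real.rpow_nonneg hz.le _
  have hK0 : 0 ≤ K0 := by
    have h1 : (0:ℝ) ≤ (2*t) ^ (-a) := Real.rpow_nonneg (by positivity) _
    have h2 : (0:ℝ) ≤ (2*s) ^ (-a) := Real.rpow_nonneg (by positivity) _
    have h3 := Real.exp_pos (-x^2/(2*t))
    have h4 := Real.exp_pos (-z^2/(2*s))
    rw [hK0_def]; positivity
  set F : ℕ × ℕ → ℝ → ℝ := fun p y =>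
    K0 * (Jf a ux p.1 * Jf a vz p.2) *
      (y ^ (δ - 1 + ((2*(p.1+p.2) : ℕ) : ℝ)) * Real.exp (-c * y^2)) with hF_def
  clear_value F
  clear_value K0
  clear_value A B
  clear_value ux vz
  clear_value c
  clear_value a
  -- pointwise identity on Ioi 0
  have hpt : ∀ y ∈ Set.Ioi (0:ℝ),
      besselDensity δ t x y * besselDensity δ s y z = ∑' p : ℕ × ℕ, F p y := by
    intro y hy
    have hy0 : (0:ℝ) < y := hy
    have hJu : Summable (Jf a ((x*y/(2*t))^2)) := summable_Jf ha (sq_nonneg _)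
    have hJv : Summable (Jf a ((y*z/(2*s))^2)) := summable_Jf ha (sq_nonneg _)
    have hprod : Summable (fun p : ℕ × ℕ =>
        Jf a ((x*y/(2*t))^2) p.1 * Jf a ((y*z/(2*s))^2) p.2) :=
      hJu.mul_of_nonneg hJv (fun m => Jf_nonneg ha0 (sq_nonneg _) m)
        (fun n => Jf_nonneg ha0 (sq_nonneg _) n)
    have key : J a ((x*y/(2*t))^2) * J a ((y*z/(2*s))^2)
        = ∑' p : ℕ × ℕ, Jf a ((x*y/(2*t))^2) p.1 * Jf a ((y*z/(2*s))^2) p.2 :=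
      Summable.tsum_mul_tsum hJu hJv hprod
    have hexp : Real.exp (-(x^2+y^2)/(2*t)) * Real.exp (-(y^2+z^2)/(2*s))
        = Real.exp (-x^2/(2*t)) * Real.exp (-z^2/(2*s)) * Real.exp (-c*y^2) := by
      rw [← Real.exp_add, ← Real.exp_add, ← Real.exp_add]
      congr 1
      rw [hc_def]
      field_simp
      ring
    rw [besselDensity_eq hδ0 ht x y, besselDensity_eq hδ0 hs y z, ← ha_def]
    have hsum_eq : ∑' p : ℕ × ℕ, F p y
        = K0 * (y ^ (δ-1) * Real.exp (-c*y^2)) *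
            ∑' p : ℕ × ℕ, Jf a ((x*y/(2*t))^2) p.1 * Jf a ((y*z/(2*s))^2) p.2 := by
      simp only [hF_def]
      rw [← tsum_mul_left]
      refine tsum_congr fun p => ?_
      obtain ⟨m, n⟩ := p
      have hu_split : (x*y/(2*t))^2 = ux * y^2 := by rw [hux_def]; ring
      have hv_split : (y*z/(2*s))^2 = vz * y^2 := by rw [hvz_def]; ring
      have hJfu : Jf a ((x*y/(2*t))^2) m = Jf a ux m * y^(2*m) := by
        show ((x*y/(2*t))^2) ^ m / (m.factorial * Real.Gamma (a + m)) = _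
        rw [hu_split, mul_pow, ← pow_mul]
        show _ = ux ^ m / (m.factorial * Real.Gamma (a + m)) * y ^ (2*m)
        ring
      have hJfv : Jf a ((y*z/(2*s))^2) n = Jf a vz n * y^(2*n) := by
        show ((y*z/(2*s))^2) ^ n / (n.factorial * Real.Gamma (a + n)) = _
        rw [hv_split, mul_pow, ← pow_mul]
        show _ = vz ^ n / (n.factorial * Real.Gamma (a + n)) * y ^ (2*n)
        ring
      have hpow : y ^ (δ - 1 + ((2*(m+n) : ℕ) : ℝ))
          = y ^ (δ-1) * (y ^ (2*m) * y ^ (2*n)) := by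
        rw [Real.rpow_add hy0, Real.rpow_natCast, ← pow_add]
        congr 2
        ring
      show K0 * (Jf a ux m * Jf a vz n) *
          (y ^ (δ - 1 + ((2*(m+n) : ℕ) : ℝ)) * Real.exp (-c * y^2)) = _
      rw [hpow, hJfu, hJfv]
      ring
    rw [hsum_eq, ← key]
    rw [hK0_def]
    linear_combination (4 * z ^ (δ-1) * ((2*t) ^ (-a) * (2*s) ^ (-a)) * y ^ (δ-1) *
      (J a ((x*y/(2*t))^2) * J a ((y*z/(2*s))^2))) * hexp
  -- integrability and values of termwise integrals
  have hq : ∀ p : ℕ × ℕ, (-1:ℝ) < δ - 1 + ((2*(p.1+p.2) : ℕ) : ℝ) := by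
    intro p
    have : (0:ℝ) ≤ ((2*(p.1+p.2) : ℕ) : ℝ) := Nat.cast_nonneg _
    linarith
  have hFint : ∀ p : ℕ × ℕ, Integrable (F p) (volume.restrict (Set.Ioi 0)) := by
    intro p
    simp only [hF_def]
    exact ((gaussian_moment_integrable hc (hq p)).const_mul _)
  have hval : ∀ p : ℕ × ℕ, ∫ y in Set.Ioi (0:ℝ), F p y
      = (K0 * c ^ (-a) / 2) * f2 a A B p := by
    rintro ⟨m, n⟩
    simp only [hF_def]
    rw [MeasureTheory.integral_const_mul, gaussian_moment hc (hq (m,n))]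
    have harg : (δ - 1 + ((2*(m+n) : ℕ) : ℝ) + 1)/2 = a + m + n := by
      rw [ha_def]; push_cast; ring
    have hsplit : c ^ (-(δ - 1 + ((2*(m+n) : ℕ) : ℝ) + 1)/2)
        = c ^ (-a) * ((c ^ m)⁻¹ * (c ^ n)⁻¹) := by
      rw [show (-(δ - 1 + ((2*(m+n) : ℕ) : ℝ) + 1)/2)
          = -a + (-(m:ℝ) + -(n:ℝ)) by rw [ha_def]; push_cast; ring]
      rw [Real.rpow_add hc, Real.rpow_add hc, Real.rpow_neg hc.le (m:ℝ),
        Real.rpow_neg hc.le (n:ℝ), Real.rpow_natCast, Real.rpow_natCast]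
    rw [harg, hsplit]
    show K0 * (ux ^ m / (m.factorial * Real.Gamma (a + m)) *
        (vz ^ n / (n.factorial * Real.Gamma (a + n)))) *
        (c ^ (-a) * ((c ^ m)⁻¹ * (c ^ n)⁻¹) * (1/2) * Real.Gamma (a + m + n))
      = (K0 * c ^ (-a) / 2) *
        (Real.Gamma (a + m + n) / (Real.Gamma (a + m) * Real.Gamma (a + n)) *
          (A ^ m * B ^ n / (m.factorial * n.factorial)))
    rw [hA_def, hB_def, div_pow, div_pow]
    have h1 : Real.Gamma (a + m) ≠ 0 := (hGk m).ne'
    have h2 : Real.Gamma (a + n) ≠ 0 := (hGk n).ne'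
    have h3 : (m.factorial : ℝ) ≠ 0 := by exact_mod_cast m.factorial_ne_zero
    have h4 : (n.factorial : ℝ) ≠ 0 := by exact_mod_cast n.factorial_ne_zero
    have h5 : (c:ℝ) ≠ 0 := hc.ne'
    field_simp
  have hFpos : ∀ p : ℕ × ℕ, ∀ y ∈ Set.Ioi (0:ℝ), 0 ≤ F p y := by
    intro p y hy
    have hy0 : (0:ℝ) < y := hy
    have j1 := Jf_nonneg ha0 hux p.1
    have j2 := Jf_nonneg ha0 hvz p.2
    have hr : (0:ℝ) ≤ y ^ (δ - 1 + ((2*(p.1+p.2) : ℕ) : ℝ)) := Real.rpow_nonneg hy0.le _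
    have he := Real.exp_pos (-c * y^2)
    simp only [hF_def]
    positivity
  have hnorm : ∀ p : ℕ × ℕ, ∫ y in Set.Ioi (0:ℝ), ‖F p y‖
      = ∫ y in Set.Ioi (0:ℝ), F p y := by
    intro p
    refine MeasureTheory.integral_congr_ae ?_
    filter_upwards [MeasureTheory.ae_restrict_mem measurableSet_Ioi] with y hy
    exact Real.norm_of_nonneg (hFpos p y hy)
  have hsummable : Summable (fun p : ℕ × ℕ => ∫ y in Set.Ioi (0:ℝ), ‖F p y‖) := by
    refine Summable.congr ((summable_f2 ha hA hB).mul_left (K0 * c ^ (-a) / 2)) ?_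
    intro p
    rw [hnorm, hval]
  rw [MeasureTheory.setIntegral_congr_fun measurableSet_Ioi hpt]
  rw [← MeasureTheory.integral_tsum_of_summable_integral_norm hFint hsummable]
  rw [show (∑' p : ℕ × ℕ, ∫ y in Set.Ioi (0:ℝ), F p y)
      = ∑' p : ℕ × ℕ, (K0 * c ^ (-a) / 2) * f2 a A B p from tsum_congr hval]
  rw [tsum_mul_left, tsum_f2 ha hA hB]
  -- final algebra
  rw [besselDensity_eq hδ0 hts x z, ← ha_def]
  have hABJ : A * B = (x*z/(2*(t+s)))^2 := by
    rw [hA_def, hB_def, hux_def, hvz_def, hc_def]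
    field_simp
  have hrpow : (2*t) ^ (-a) * (2*s) ^ (-a) * c ^ (-a) = (2*(t+s)) ^ (-a) := by
    rw [← Real.mul_rpow (by positivity) (by positivity),
      ← Real.mul_rpow (by positivity) hc.le]
    congr 1
    rw [hc_def]
    field_simp
  have hexp3 : Real.exp (-x^2/(2*t)) * Real.exp (-z^2/(2*s)) * Real.exp (A+B)
      = Real.exp (-(x^2+z^2)/(2*(t+s))) := by
    rw [← Real.exp_add, ← Real.exp_add]
    congr 1
    rw [hA_def, hB_def, hux_def, hvz_def, hc_def]
    field_simp
    ring
  rw [← hABJ]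
  calc K0 * c ^ (-a) / 2 * (Real.exp (A+B) * J a (A*B))
      = 2 * z ^ (δ-1) * ((2*t) ^ (-a) * (2*s) ^ (-a) * c ^ (-a)) *
          (Real.exp (-x^2/(2*t)) * Real.exp (-z^2/(2*s)) * Real.exp (A+B)) *
          J a (A*B) := by
        rw [hK0_def]; ring
    _ = 2 * z ^ (δ-1) * (2*(t+s)) ^ (-a) * J a (A*B) *
          Real.exp (-(x^2+z^2)/(2*(t+s))) := by
        rw [hrpow, hexp3]; ring
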